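/- Let K ⊆ ℂ be compact with 1 ∈ K, and for ρ ≥ 0 let e_ρ : K → ℂ be the continuous function given by e_ρ(z) = (z−1)·exp(ρ(z+1)/(z−1)) for z ≠ 1 and e_ρ(1) = 0. If K ⊆ D̄ (the closed unit disc), then for 0 ≤ ρ₁ < ρ₂ the function e_{ρ₂} belongs to the closed ideal of R(K) generated by e_{ρ₁}, where R(K) is the uniform closure in C(K) of rational functions with poles off K. -/

import Mathlib

open scoped Nat

lemma aux_re {z : ℂ} {r : ℝ} (hz : ‖z‖ ≤ 1) (hr : 1 ≤ r) :
    ((z + 1) / (z - (r : ℂ))).re ≤ 0 := by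
  have hxy : z.re ^ 2 + z.im ^ 2 ≤ 1 := by
    have h := Complex.sq_norm z
    rw [Complex.normSq_apply] at h
    nlinarith [norm_nonneg z]
  have hx : -1 ≤ z.re := by nlinarith [sq_nonneg z.im]
  rw [Complex.div_re, ← add_div]
  apply div_nonpos_of_nonpos_of_nonneg _ (Complex.normSq_nonneg _)
  simp only [Complex.add_re, Complex.sub_re, Complex.add_im, Complex.sub_im, Complex.one_re,
    Complex.one_im, Complex.ofReal_re, Complex.ofReal_im]
  nlinarith [mul_nonneg (by linarith : (0:ℝ) ≤ r - 1) (by linarith : (0:ℝ) ≤ z.re + 1)]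

lemma aux_exp_le {z : ℂ} {r ρ : ℝ} (hz : ‖z‖ ≤ 1) (hr : 1 ≤ r) (hρ : 0 ≤ ρ) :
    ‖Complex.exp ((ρ : ℂ) * (z + 1) / (z - (r : ℂ)))‖ ≤ 1 := by
  rw [Complex.norm_exp, Real.exp_le_one_iff]
  have h : (ρ : ℂ) * (z + 1) / (z - (r : ℂ)) = (ρ : ℂ) * ((z + 1) / (z - (r : ℂ))) :=
    mul_div_assoc _ _ _
  rw [h, Complex.re_ofReal_mul]
  exact mul_nonpos_iff.mpr (Or.inl ⟨hρ, aux_re hz hr⟩)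

/-- Restrictions to `K` of rational functions with no poles on `K`. -/
def ratFns (K : Set ℂ) : Set C(K, ℂ) :=
  {g | ∃ p q : Polynomial ℂ, (∀ z : K, q.eval (z : ℂ) ≠ 0) ∧
      ∀ z : K, g z = p.eval (z : ℂ) / q.eval (z : ℂ)}

/-- `R(K)`: the uniform closure in `C(K)` of the rational functions with poles off `K`. -/
def RK (K : Set ℂ) : Set C(K, ℂ) := closure (ratFns K)

lemma abs_le_one_of_mem {K : Set ℂ} (hKD : K ⊆ Metric.closedBall 0 1) (z : K) :
    ‖(z : ℂ)‖ ≤ 1 := by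
  have := hKD z.2
  simpa [Metric.mem_closedBall, Complex.dist_eq] using this

lemma sub_r_ne_zero {K : Set ℂ} (hKD : K ⊆ Metric.closedBall 0 1) {r : ℝ} (hr : 1 < r)
    (z : K) : (z : ℂ) - (r : ℂ) ≠ 0 := by
  intro h
  have h2 : (z : ℂ) = (r : ℂ) := sub_eq_zero.mp h
  have h3 : ‖(z : ℂ)‖ = r := by
    rw [h2, Complex.norm_real, Real.norm_eq_abs, abs_of_pos (by linarith)]
  have := abs_le_one_of_mem hKD z
  rw [h3] at this
  linarith

lemma expRat_mem_RK {K : Set ℂ} [CompactSpace K] (hKD : K ⊆ Metric.closedBall 0 1)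
    (τ r : ℝ) (hr : 1 < r) (F : C(K, ℂ))
    (hF : ∀ z : K, F z = Complex.exp ((τ : ℂ) * ((z : ℂ) + 1) / ((z : ℂ) - (r : ℂ)))) :
    F ∈ RK K := by
  have hne : ∀ z : K, (z : ℂ) - (r : ℂ) ≠ 0 := sub_r_ne_zero hKD hr
  have hcont : Continuous fun z : K => (τ : ℂ) * ((z : ℂ) + 1) / ((z : ℂ) - (r : ℂ)) :=
    (continuous_const.mul (continuous_subtype_val.add continuous_const)).div
      (continuous_subtype_val.sub continuous_const) hne
  set W : C(K, ℂ) := ContinuousMap.mk _ hcont with hW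
  set M : ℝ := ‖W‖ with hM
  have hWb : ∀ z : K, ‖W z‖ ≤ M := fun z => W.norm_coe_le_norm z
  rw [RK, Metric.mem_closure_iff]
  intro ε hε
  have hsum : Summable (fun n : ℕ => M ^ n / n !) := Real.summable_pow_div_factorial M
  have htail : Filter.Tendsto (fun N : ℕ => ∑' k : ℕ, M ^ (k + N) / (k + N) !)
      Filter.atTop (nhds 0) := tendsto_sum_nat_add (fun n : ℕ => M ^ n / n !)
  obtain ⟨N, hN⟩ := (htail.eventually_lt_const hε).exists
  set gN : C(K, ℂ) := ContinuousMap.mk (fun z => ∑ n ∈ Finset.range N, (W z) ^ n / n !)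
    (by exact continuous_finset_sum _ fun n _ => (W.continuous.pow n).div_const _) with hgN
  refine ⟨gN, ?_, ?_⟩
  · refine ⟨∑ n ∈ Finset.range N,
        Polynomial.C ((τ : ℂ) ^ n / n !) * (Polynomial.X + 1) ^ n *
          (Polynomial.X - Polynomial.C (r : ℂ)) ^ (N - n),
      (Polynomial.X - Polynomial.C (r : ℂ)) ^ N, ?_, ?_⟩
    · intro z
      simpa using pow_ne_zero N (hne z)
    · intro z
      simp only [hgN, ContinuousMap.coe_mk, hW, Polynomial.eval_finset_sum, Polynomial.eval_mul,
        Polynomial.eval_pow, Polynomial.eval_add, Polynomial.eval_sub, Polynomial.eval_X,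
        Polynomial.eval_one, Polynomial.eval_C]
      rw [Finset.sum_div]
      refine Finset.sum_congr rfl fun n hn => ?_
      have hnN : n ≤ N := (Finset.mem_range.mp hn).le
      rw [pow_sub₀ _ (hne z) hnN]
      rw [show ((τ : ℂ) * ((z : ℂ) + 1) / ((z : ℂ) - (r : ℂ))) ^ n
          = (τ : ℂ) ^ n * ((z : ℂ) + 1) ^ n / ((z : ℂ) - (r : ℂ)) ^ n by
        rw [div_pow, mul_pow]]
      have hq : ((z : ℂ) - (r : ℂ)) ^ N ≠ 0 := pow_ne_zero _ (hne z)
      have hq' : ((z : ℂ) - (r : ℂ)) ^ n ≠ 0 := pow_ne_zero _ (hne z)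
      have hfac : ((n ! : ℂ)) ≠ 0 := Nat.cast_ne_zero.mpr n.factorial_ne_zero
      field_simp
  · have key : ∀ z : K, dist (F z) (gN z) ≤ ∑' k : ℕ, M ^ (k + N) / (k + N) ! := by
      intro z
      have hS : Summable (fun n : ℕ => (W z) ^ n / (n ! : ℂ)) :=
        NormedSpace.expSeries_div_summable (W z)
      have hfz : F z = ∑' n : ℕ, (W z) ^ n / (n ! : ℂ) := by
        rw [hF z, Complex.exp_eq_exp_ℂ, NormedSpace.exp_eq_tsum_div]; rfl
      have hsplit := hS.sum_add_tsum_nat_add N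
      have hdiff : F z - gN z = ∑' k : ℕ, (W z) ^ (k + N) / ((k + N) ! : ℂ) := by
        rw [hfz]
        simp only [hgN, ContinuousMap.coe_mk]
        rw [← hsplit]
        ring
      have hterm : ∀ k : ℕ, ‖(W z) ^ (k + N) / ((k + N) ! : ℂ)‖ ≤ M ^ (k + N) / (k + N) ! := by
        intro k
        rw [norm_div, norm_pow, Complex.norm_natCast]
        gcongr
        exact hWb z
      have hsum' : Summable (fun k : ℕ => M ^ (k + N) / ((k + N) ! : ℝ)) :=
        (summable_nat_add_iff N).mpr hsum
      have hnorm : Summable (fun k : ℕ => ‖(W z) ^ (k + N) / ((k + N) ! : ℂ)‖) :=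
        Summable.of_nonneg_of_le (fun k => norm_nonneg _) hterm hsum'
      calc dist (F z) (gN z) = ‖F z - gN z‖ := by rw [dist_eq_norm]
        _ = ‖∑' k : ℕ, (W z) ^ (k + N) / ((k + N) ! : ℂ)‖ := by rw [hdiff]
        _ ≤ ∑' k : ℕ, ‖(W z) ^ (k + N) / ((k + N) ! : ℂ)‖ := norm_tsum_le_tsum_norm hnorm
        _ ≤ ∑' k : ℕ, M ^ (k + N) / ((k + N) ! : ℝ) := Summable.tsum_le_tsum hterm hnorm hsum'
    have htsnn : 0 ≤ ∑' k : ℕ, M ^ (k + N) / ((k + N) ! : ℝ) := by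
      apply tsum_nonneg
      intro k
      positivity
    calc dist F gN ≤ ∑' k : ℕ, M ^ (k + N) / ((k + N) ! : ℝ) :=
          (ContinuousMap.dist_le htsnn).mpr key
      _ < ε := hN

set_option maxHeartbeats 1000000 in
/-- For `K ⊆ D̄` compact with `1 ∈ K`, and `0 ≤ ρ₁ < ρ₂`, the function
`e_{ρ₂}` lies in the closed ideal of `R(K)` generated by `e_{ρ₁}`, where
`e_ρ(z) = (z−1) exp(ρ(z+1)/(z−1))` for `z ≠ 1` and `e_ρ(1) = 0`. -/
theorem stmt10 (K : Set ℂ) (hK : IsCompact K) (h1 : (1 : ℂ) ∈ K)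
    (hKD : K ⊆ Metric.closedBall 0 1)
    (ρ₁ ρ₂ : ℝ) (h0 : 0 ≤ ρ₁) (h12 : ρ₁ < ρ₂)
    (e₁ e₂ : C(K, ℂ))
    (he₁ : ∀ z : K, ((z : ℂ) ≠ 1 →
        e₁ z = ((z : ℂ) - 1) * Complex.exp ((ρ₁ : ℂ) * ((z : ℂ) + 1) / ((z : ℂ) - 1)))
      ∧ ((z : ℂ) = 1 → e₁ z = 0))
    (he₂ : ∀ z : K, ((z : ℂ) ≠ 1 →
        e₂ z = ((z : ℂ) - 1) * Complex.exp ((ρ₂ : ℂ) * ((z : ℂ) + 1) / ((z : ℂ) - 1)))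
      ∧ ((z : ℂ) = 1 → e₂ z = 0)) :
    e₂ ∈ closure ((fun f : C(K, ℂ) => f * e₁) '' RK K) := by
  haveI : CompactSpace K := isCompact_iff_compactSpace.mp hK
  haveI : Nonempty K := ⟨⟨1, h1⟩⟩
  rw [Metric.mem_closure_iff]
  intro ε hε
  set τ : ℝ := ρ₂ - ρ₁ with hτdef
  have hτ : 0 < τ := by rw [hτdef]; linarith
  set δ : ℝ := ε / 4 with hδdef
  have hδ : 0 < δ := by positivity
  set m : ℝ := min 1 (ε / 8) with hmdef
  have hm : 0 < m := lt_min one_pos (by positivity)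
  have hm1 : m ≤ 1 := min_le_left _ _
  have hmε : m ≤ ε / 8 := min_le_right _ _
  set s : ℝ := min (δ / 2) (δ ^ 2 * m / (8 * τ)) with hsdef
  have hs : 0 < s := lt_min (by positivity) (by positivity)
  have hs1 : s ≤ δ / 2 := min_le_left _ _
  have hs2 : s ≤ δ ^ 2 * m / (8 * τ) := min_le_right _ _
  set r : ℝ := 1 + s with hrdef
  have hr : 1 < r := by rw [hrdef]; linarith
  have hne : ∀ z : K, (z : ℂ) - (r : ℂ) ≠ 0 := sub_r_ne_zero hKD hr
  have hcont : Continuous fun z : K =>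
      Complex.exp ((τ : ℂ) * ((z : ℂ) + 1) / ((z : ℂ) - (r : ℂ))) :=
    Complex.continuous_exp.comp
      ((continuous_const.mul (continuous_subtype_val.add continuous_const)).div
        (continuous_subtype_val.sub continuous_const) hne)
  set F : C(K, ℂ) := ContinuousMap.mk _ hcont with hFdef
  have hFR : F ∈ RK K := expRat_mem_RK hKD τ r hr F (fun z => rfl)
  refine ⟨F * e₁, ⟨F, hFR, rfl⟩, ?_⟩
  rw [ContinuousMap.dist_lt_iff hε]
  intro z
  rw [ContinuousMap.mul_apply]
  by_cases hz1 : (z : ℂ) = 1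
  · rw [(he₂ z).2 hz1, (he₁ z).2 hz1, mul_zero]
    simpa using hε
  · have hz : ‖(z : ℂ)‖ ≤ 1 := abs_le_one_of_mem hKD z
    rw [(he₂ z).1 hz1, (he₁ z).1 hz1, Complex.dist_eq]
    set u : ℂ := (z : ℂ) with hudef
    have hu1 : u - 1 ≠ 0 := sub_ne_zero.mpr hz1
    have hur : u - (r : ℂ) ≠ 0 := hne z
    set a : ℂ := (τ : ℂ) * (u + 1) / (u - 1) with hadef
    set b : ℂ := (τ : ℂ) * (u + 1) / (u - (r : ℂ)) with hbdef
    set c : ℂ := (ρ₁ : ℂ) * (u + 1) / (u - 1) with hcdef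
    have hkey : Complex.exp ((ρ₂ : ℂ) * (u + 1) / (u - 1)) = Complex.exp c * Complex.exp a := by
      rw [← Complex.exp_add]
      congr 1
      rw [hcdef, hadef, hτdef]
      push_cast
      field_simp
      ring
    have hFz : F z = Complex.exp b := rfl
    have hdiff : (u - 1) * Complex.exp ((ρ₂ : ℂ) * (u + 1) / (u - 1))
        - F z * ((u - 1) * Complex.exp c)
        = (u - 1) * Complex.exp c * (Complex.exp a - Complex.exp b) := by
      rw [hFz, hkey]; ring
    rw [hdiff, norm_mul, norm_mul]
    have hec : ‖Complex.exp c‖ ≤ 1 := by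
      have := aux_exp_le (r := 1) hz le_rfl h0
      simpa [hcdef] using this
    have heb : ‖Complex.exp b‖ ≤ 1 := aux_exp_le hz hr.le hτ.le
    have hea : ‖Complex.exp a‖ ≤ 1 := by
      have := aux_exp_le (r := 1) hz le_rfl hτ.le
      simpa [hadef] using this
    by_cases hδc : ‖u - 1‖ ≤ δ
    · have hE : ‖Complex.exp a - Complex.exp b‖ ≤ 2 := by
        calc ‖Complex.exp a - Complex.exp b‖
            ≤ ‖Complex.exp a‖ + ‖Complex.exp b‖ :=
              norm_sub_le _ _
          _ ≤ 2 := by linarith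
      calc ‖u - 1‖ * ‖Complex.exp c‖
            * ‖Complex.exp a - Complex.exp b‖
          ≤ δ * 1 * 2 := by
            apply mul_le_mul (mul_le_mul hδc hec (norm_nonneg _) hδ.le) hE
              (norm_nonneg _)
            positivity
        _ = ε / 2 := by rw [hδdef]; ring
        _ < ε := by linarith
    · push_neg at hδc
      have hu2 : ‖u - 1‖ ≤ 2 := by
        calc ‖u - 1‖ ≤ ‖u‖ + ‖1‖ := norm_sub_le _ _
          _ ≤ 2 := by rw [norm_one]; linarith
      have hu3 : ‖u + 1‖ ≤ 2 := by
        calc ‖u + 1‖ ≤ ‖u‖ + ‖1‖ := norm_add_le _ _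
          _ ≤ 2 := by rw [norm_one]; linarith
      have hr1 : ‖(r : ℂ) - 1‖ = s := by
        rw [show ((r : ℂ) - 1) = ((s : ℝ) : ℂ) by rw [hrdef]; push_cast; ring,
          Complex.norm_real, Real.norm_eq_abs, abs_of_pos hs]
      have h6 : δ / 2 ≤ ‖u - (r : ℂ)‖ := by
        have htri : ‖u - 1‖
            ≤ ‖u - (r : ℂ)‖ + ‖(r : ℂ) - 1‖ := by
          calc ‖u - 1‖ = ‖(u - (r : ℂ)) + ((r : ℂ) - 1)‖ := by ring_nf
            _ ≤ _ := norm_add_le _ _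
        rw [hr1] at htri
        linarith
      have hab : a - b = (τ : ℂ) * (u + 1) * ((1 : ℂ) - (r : ℂ)) / ((u - 1) * (u - (r : ℂ))) := by
        rw [hadef, hbdef]
        field_simp
        ring
      have habs : ‖a - b‖
          = τ * ‖u + 1‖ * s / (‖u - 1‖ * ‖u - (r : ℂ)‖) := by
        rw [hab, norm_div, norm_mul, norm_mul, norm_mul, Complex.norm_real, Real.norm_eq_abs, abs_of_pos hτ,
          show ((1 : ℂ) - (r : ℂ)) = -((r : ℂ) - 1) by ring, norm_neg, hr1]
      have habs_le : ‖a - b‖ ≤ τ * 2 * s / (δ * (δ / 2)) := by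
        rw [habs]
        apply div_le_div₀ (by positivity) (by nlinarith [mul_le_mul_of_nonneg_right (mul_le_mul_of_nonneg_left hu3 hτ.le) hs.le])
          (by positivity)
        exact mul_le_mul hδc.le h6 (by positivity) (norm_nonneg _)
      have h8 : τ * 2 * s / (δ * (δ / 2)) ≤ m / 2 := by
        rw [div_le_iff₀ (by positivity)]
        have h9 : s * (8 * τ) ≤ δ ^ 2 * m := (le_div_iff₀ (by positivity)).mp hs2
        nlinarith
      have hab1 : ‖a - b‖ ≤ 1 := by linarith
      have hE : ‖Complex.exp a - Complex.exp b‖ ≤ ε / 4 := by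
        have h10 : Complex.exp a - Complex.exp b
            = Complex.exp b * (Complex.exp (a - b) - 1) := by
          rw [mul_sub, mul_one, ← Complex.exp_add]
          congr 1
          ring
        rw [h10, norm_mul]
        have h11 := Complex.norm_exp_sub_one_le hab1
        calc ‖Complex.exp b‖ * ‖Complex.exp (a - b) - 1‖
            ≤ 1 * (2 * ‖a - b‖) :=
              mul_le_mul heb h11 (norm_nonneg _) one_pos.le
          _ ≤ 1 * (2 * (m / 2)) := by
            have : ‖a - b‖ ≤ m / 2 := by linarith
            nlinarith [norm_nonneg (a - b)]
          _ ≤ ε / 4 := by rw [one_mul]; linarith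
      calc ‖u - 1‖ * ‖Complex.exp c‖
            * ‖Complex.exp a - Complex.exp b‖
          ≤ 2 * 1 * (ε / 4) := by
            apply mul_le_mul (mul_le_mul hu2 hec (norm_nonneg _) (by norm_num)) hE
              (norm_nonneg _)
            norm_num
        _ < ε := by linarith
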